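/- Let f : [0,∞) → ℝ be continuous convex with f(1) = 0, λ in the subdifferential of f at 1, K > 0 and α > 0 such that |f(t) - λ(t-1)| ≤ K|t-1|^{α+1} for all t ≥ 0. Then for any probability densities p, q with respect to μ: 0 ≤ I_f(Q,P) ≤ K·∫ p^{-α}|q - p|^{α+1} dμ. -/

import Mathlib

open Set MeasureTheory

theorem f_divergence_chi_alpha_bounds
    {X : Type*} [MeasurableSpace X] (μ : Measure X)
    (p q : X → ℝ) (f : ℝ → ℝ) (lam K α : ℝ)
    (hK : 0 < K) (hα : 0 < α)
    (hp0 : ∀ x, 0 ≤ p x) (hq0 : ∀ x, 0 ≤ q x)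
    (hppos : ∀ᵐ x ∂μ, 0 < p x)
    (hpm : Measurable p) (hqm : Measurable q) (hfm : Measurable f)
    (hp : Integrable p μ) (hq : Integrable q μ)
    (hp1 : ∫ x, p x ∂μ = 1) (hq1 : ∫ x, q x ∂μ = 1)
    (hconv : ConvexOn ℝ (Ici 0) f) (hfc : ContinuousOn f (Ici 0))
    (hf1 : f 1 = 0)
    (hlam : ∀ t ≥ (0:ℝ), lam * (t - 1) ≤ f t)
    (hcond : ∀ t ≥ (0:ℝ), |f t - lam * (t - 1)| ≤ K * |t - 1| ^ (α + 1))
    (hint : Integrable (fun x => p x * f (q x / p x)) μ)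
    (hint2 : Integrable (fun x => p x ^ (-α) * |q x - p x| ^ (α + 1)) μ) :
    0 ≤ (∫ x, p x * f (q x / p x) ∂μ) ∧
      (∫ x, p x * f (q x / p x) ∂μ) ≤
        K * ∫ x, p x ^ (-α) * |q x - p x| ^ (α + 1) ∂μ := by
  have hmain : ∀ᵐ x ∂μ,
      lam * (q x - p x) ≤ p x * f (q x / p x) ∧
      p x * f (q x / p x) ≤
        lam * (q x - p x) + K * (p x ^ (-α) * |q x - p x| ^ (α + 1)) := by
    filter_upwards [hppos] with x hpx
    set t := q x / p x with ht
    have ht0 : 0 ≤ t := div_nonneg (hq0 x) hpx.le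
    have hsub : t - 1 = (q x - p x) / p x := by
      field_simp [ht]
      rw [ht, sub_mul, div_mul_cancel₀ _ (ne_of_gt hpx), one_mul]
    have habs : |t - 1| = |q x - p x| / p x := by
      rw [hsub, abs_div, abs_of_pos hpx]
    have hpinv : p x ^ (-α) = p x / p x ^ (α + 1) := by
      rw [eq_div_iff (ne_of_gt (Real.rpow_pos_of_pos hpx _)), ← Real.rpow_add hpx]
      norm_num
    have hpow : p x * |t - 1| ^ (α + 1) = p x ^ (-α) * |q x - p x| ^ (α + 1) := by
      rw [habs, Real.div_rpow (abs_nonneg _) hpx.le, hpinv]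
      ring
    have hlin : p x * (lam * (t - 1)) = lam * (q x - p x) := by
      rw [hsub]; field_simp
    constructor
    · calc lam * (q x - p x) = p x * (lam * (t - 1)) := hlin.symm
        _ ≤ p x * f t := by
            exact mul_le_mul_of_nonneg_left (hlam t ht0) hpx.le
    · have h2 := (abs_le.mp (hcond t ht0)).2
      have : f t ≤ lam * (t - 1) + K * |t - 1| ^ (α + 1) := by linarith
      calc p x * f t ≤ p x * (lam * (t - 1) + K * |t - 1| ^ (α + 1)) :=
            mul_le_mul_of_nonneg_left this hpx.le
        _ = p x * (lam * (t - 1)) + K * (p x * |t - 1| ^ (α + 1)) := by ring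
        _ = lam * (q x - p x) + K * (p x ^ (-α) * |q x - p x| ^ (α + 1)) := by
            rw [hlin, hpow]
  have hintlin : Integrable (fun x => lam * (q x - p x)) μ := ((hq.sub hp).const_mul lam)
  have hzero : ∫ x, lam * (q x - p x) ∂μ = 0 := by
    rw [integral_const_mul, integral_sub hq hp, hq1, hp1]
    ring
  constructor
  · have := integral_mono_ae hintlin hint (hmain.mono fun x hx => hx.1)
    rwa [hzero] at this
  · have := integral_mono_ae hint (hintlin.add (hint2.const_mul K))
      (hmain.mono fun x hx => hx.2)
    simp only [Pi.add_apply] at this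
    rwa [integral_add hintlin (hint2.const_mul K), hzero, zero_add,
      integral_const_mul] at this
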